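/- Let Δ be a numerical semigroup, d ≥ 2, and let S be a numerical semigroup with S/d = Δ and A = msg(S) \ dΔ. Then msg(S) = A ∪ {d·n : n ∈ msg(Δ), d·n ∉ ⟨A⟩}, and consequently e(S) = e(Δ) + |A| − |{n ∈ msg(Δ) : d·n ∈ ⟨A⟩}|. -/

import Mathlib

/-- A submonoid of (ℕ,+), as a set. -/
def IsSubmonoidN (M : Set ℕ) : Prop :=
  0 ∈ M ∧ ∀ a b : ℕ, a ∈ M → b ∈ M → a + b ∈ M

/-- A numerical semigroup: a submonoid of ℕ with finite complement. -/
def IsNumericalSemigroup (S : Set ℕ) : Prop :=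
  IsSubmonoidN S ∧ (Sᶜ : Set ℕ).Finite

/-- The quotient A/d = {x : d·x ∈ A}. -/
def quotSet (A : Set ℕ) (d : ℕ) : Set ℕ := {x | d * x ∈ A}

/-- The dilation d·A = {d·s : s ∈ A}. -/
def dilate (d : ℕ) (A : Set ℕ) : Set ℕ := (fun s => d * s) '' A

/-- Sumset A + B. -/
def setAdd (A B : Set ℕ) : Set ℕ := {n | ∃ a ∈ A, ∃ b ∈ B, n = a + b}

/-- Minimal system of generators: nonzero elements not a sum of two nonzero elements. -/
def msg (S : Set ℕ) : Set ℕ :=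
  {x | x ∈ S ∧ x ≠ 0 ∧ ∀ a b : ℕ, a ∈ S → b ∈ S → a ≠ 0 → b ≠ 0 → x ≠ a + b}

/-- Frobenius number: largest element of the complement. -/
noncomputable def frob (S : Set ℕ) : ℕ := sSup (Sᶜ : Set ℕ)

/-- Genus: number of gaps. -/
noncomputable def genus (S : Set ℕ) : ℕ := (Sᶜ : Set ℕ).ncard

/-- Multiplicity: least nonzero element. -/
noncomputable def multy (S : Set ℕ) : ℕ := sInf {x | x ∈ S ∧ x ≠ 0}

/-- n(S) = number of elements of S below the Frobenius number. -/
noncomputable def nnum (S : Set ℕ) : ℕ := {s | s ∈ S ∧ s < frob S}.ncard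

/-- Embedding dimension. -/
noncomputable def edim (S : Set ℕ) : ℕ := (msg S).ncard

/-- The semigroup Δ_d(a) = dΔ ∪ ⋃_{i=1}^{d-1} (da+i+dΔ). -/
def Deltada (d a : ℕ) (Δ : Set ℕ) : Set ℕ :=
  dilate d Δ ∪ ⋃ i ∈ Finset.Ico 1 d, (fun s => d * a + i + d * s) '' Δ

/-- Submonoid of ℕ generated by X, as a set. -/
def genBy (X : Set ℕ) : Set ℕ := (AddSubmonoid.closure X : Set ℕ)

/-- Multiples of x. -/
def natMultiples (x : ℕ) : Set ℕ := {n | ∃ k : ℕ, n = k * x}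

/-- Apéry set of S with respect to m. -/
def apery (S : Set ℕ) (m : ℕ) : Set ℕ := {s | s ∈ S ∧ ∀ t ∈ S, s ≠ t + m}

/-- Pseudo-Frobenius numbers, as integers. -/
def PF (S : Set ℕ) : Set ℤ :=
  {z | (∀ n : ℕ, (n : ℤ) = z → n ∉ S) ∧
    ∀ s : ℕ, s ∈ S → s ≠ 0 → ∃ m : ℕ, m ∈ S ∧ (m : ℤ) = z + s}

lemma genBy_zero (X : Set ℕ) : 0 ∈ genBy X := (AddSubmonoid.closure X).zero_mem
lemma genBy_add {X : Set ℕ} {a b : ℕ} (ha : a ∈ genBy X) (hb : b ∈ genBy X) :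
    a + b ∈ genBy X := (AddSubmonoid.closure X).add_mem ha hb
lemma genBy_self {X : Set ℕ} {a : ℕ} (ha : a ∈ X) : a ∈ genBy X :=
  AddSubmonoid.subset_closure ha

lemma genBy_prop {X : Set ℕ} {S : Set ℕ} (hS : IsSubmonoidN S) (hXS : X ⊆ S)
    {x : ℕ} (hx : x ∈ genBy X) :
    x ∈ S ∧ (x = 0 ∨ x ∈ X ∨ ∃ a b : ℕ, a ∈ S ∧ b ∈ S ∧ a ≠ 0 ∧ b ≠ 0 ∧ x = a + b) := by
  induction hx using AddSubmonoid.closure_induction with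
  | mem y hy => exact ⟨hXS hy, Or.inr (Or.inl hy)⟩
  | zero => exact ⟨hS.1, Or.inl rfl⟩
  | add a b _ _ iha ihb =>
    refine ⟨hS.2 a b iha.1 ihb.1, ?_⟩
    rcases eq_or_ne a 0 with rfl | ha0
    · simpa using ihb.2
    rcases eq_or_ne b 0 with rfl | hb0
    · simpa using iha.2
    exact Or.inr (Or.inr ⟨a, b, iha.1, ihb.1, ha0, hb0, rfl⟩)

lemma msg_finite {S : Set ℕ} (hS : IsNumericalSemigroup S) : (msg S).Finite := by
  obtain ⟨N, hN⟩ := (hS.2).bddAbove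
  have hmem : ∀ x : ℕ, N < x → x ∈ S := by
    intro x hx
    by_contra hxS
    exact absurd (hN hxS) (by omega)
  apply Set.Finite.subset (Set.finite_Iic (2 * N + 2))
  intro x hx
  by_contra hxb
  simp only [Set.mem_Iic, not_le] at hxb
  have h1 : x - (N + 1) ∈ S := hmem _ (by omega)
  have h2 : (N + 1 : ℕ) ∈ S := hmem _ (by omega)
  exact hx.2.2 (x - (N+1)) (N+1) h1 h2 (by omega) (by omega) (by omega)

theorem stmt14 (Δ : Set ℕ) (hΔ : IsNumericalSemigroup Δ) (d : ℕ) (hd : 2 ≤ d)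
    (S : Set ℕ) (hS : IsNumericalSemigroup S) (hq : quotSet S d = Δ)
    (A : Set ℕ) (hA : A = msg S \ dilate d Δ) :
    msg S = A ∪ {y | ∃ n ∈ msg Δ, y = d * n ∧ d * n ∉ genBy A} ∧
    edim S = edim Δ + A.ncard - {n | n ∈ msg Δ ∧ d * n ∈ genBy A}.ncard := by
  have hd0 : d ≠ 0 := by omega
  -- membership transfers
  have hΔS : ∀ v : ℕ, v ∈ Δ ↔ d * v ∈ S := by
    intro v; rw [← hq]; rfl
  have hAS : A ⊆ S := by
    intro a ha; rw [hA] at ha; exact ha.1.1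
  have hgen : ∀ x ∈ genBy A,
      x ∈ S ∧ (x = 0 ∨ x ∈ A ∨ ∃ a b : ℕ, a ∈ S ∧ b ∈ S ∧ a ≠ 0 ∧ b ≠ 0 ∧ x = a + b) :=
    fun x hx => genBy_prop hS.1 hAS hx
  -- msg S ∩ genBy A ⊆ A
  have hmsgA : ∀ x ∈ msg S, x ∈ genBy A → x ∈ A := by
    intro x hx hxg
    rcases (hgen x hxg).2 with h0 | hAx | ⟨a, b, haS, hbS, ha0, hb0, rfl⟩
    · exact absurd h0 hx.2.1
    · exact hAx
    · exact absurd rfl (hx.2.2 a b haS hbS ha0 hb0)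
  -- decomposition lemma: every x ∈ S is u + d*v with u ∈ genBy A, v ∈ Δ
  have hdec : ∀ x : ℕ, x ∈ S → ∃ u ∈ genBy A, ∃ v ∈ Δ, x = u + d * v := by
    intro x
    induction x using Nat.strong_induction_on with
    | _ x ih =>
      intro hxS
      rcases eq_or_ne x 0 with rfl | hx0
      · exact ⟨0, genBy_zero A, 0, hΔ.1.1, by ring⟩
      by_cases hxd : x ∈ dilate d Δ
      · obtain ⟨v, hv, rfl⟩ := hxd
        exact ⟨0, genBy_zero A, v, hv, by ring⟩
      by_cases hxm : x ∈ msg S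
      · refine ⟨x, genBy_self ?_, 0, hΔ.1.1, by ring⟩
        rw [hA]; exact ⟨hxm, hxd⟩
      · have : ¬ (∀ a b : ℕ, a ∈ S → b ∈ S → a ≠ 0 → b ≠ 0 → x ≠ a + b) := by
          intro h; exact hxm ⟨hxS, hx0, h⟩
        push_neg at this
        obtain ⟨a, b, haS, hbS, ha0, hb0, hab⟩ := this
        obtain ⟨u1, hu1, v1, hv1, ha⟩ := ih a (by omega) haS
        obtain ⟨u2, hu2, v2, hv2, hb⟩ := ih b (by omega) hbS
        exact ⟨u1 + u2, genBy_add hu1 hu2, v1 + v2, hΔ.1.2 _ _ hv1 hv2, by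
          rw [hab, ha, hb]; ring⟩
  -- main set equality
  have hset : msg S = A ∪ {y | ∃ n ∈ msg Δ, y = d * n ∧ d * n ∉ genBy A} := by
    ext x
    constructor
    · intro hx
      by_cases hxd : x ∈ dilate d Δ
      · right
        obtain ⟨n, hn, rfl⟩ := hxd
        refine ⟨n, ⟨hn, ?_, ?_⟩, rfl, ?_⟩
        · rintro rfl; exact hx.2.1 (by simp)
        · intro a b haΔ hbΔ ha0 hb0 hnab
          exact hx.2.2 (d * a) (d * b) ((hΔS a).1 haΔ) ((hΔS b).1 hbΔ)
            (by positivity) (by positivity) (by rw [hnab]; ring)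
        · intro hg
          have := hmsgA _ hx hg
          rw [hA] at this
          exact this.2 ⟨n, hn, rfl⟩
      · left; rw [hA]; exact ⟨hx, hxd⟩
    · intro hx
      rcases hx with hxA | ⟨n, hn, rfl, hng⟩
      · rw [hA] at hxA; exact hxA.1
      · refine ⟨(hΔS n).1 hn.1, ?_, ?_⟩
        · have := hn.2.1; positivity
        · intro a b haS hbS ha0 hb0 hab
          obtain ⟨u1, hu1, v1, hv1, hda⟩ := hdec a haS
          obtain ⟨u2, hu2, v2, hv2, hdb⟩ := hdec b hbS
          have hu : u1 + u2 ∈ genBy A := genBy_add hu1 hu2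
          have hvΔ : v1 + v2 ∈ Δ := hΔ.1.2 _ _ hv1 hv2
          have heq : d * n = (u1 + u2) + d * (v1 + v2) := by
            rw [hab, hda, hdb]; ring
          have hvle : v1 + v2 ≤ n := by nlinarith
          have huS : u1 + u2 ∈ S := (hgen _ hu).1
          have huval : u1 + u2 = d * (n - (v1 + v2)) := by
            have : d * n = d * (n - (v1 + v2)) + d * (v1 + v2) := by
              rw [← Nat.mul_add]; congr 1; omega
            omega
          have hnvΔ : n - (v1 + v2) ∈ Δ := (hΔS _).2 (huval ▸ huS)
          have := hn.2.2 (n - (v1 + v2)) (v1 + v2) hnvΔ hvΔ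
          rcases eq_or_ne (v1 + v2) 0 with hv0 | hv0
          · -- then d*n = u1+u2 ∈ genBy A, contradiction
            apply hng
            rw [hv0] at heq
            simp only [Nat.mul_zero, Nat.add_zero] at heq
            rw [heq]; exact hu
          · rcases eq_or_ne (n - (v1 + v2)) 0 with hnv0 | hnv0
            · -- u = 0, so a,b ∈ dΔ
              have hu0 : u1 + u2 = 0 := by rw [huval, hnv0]; ring
              have hv10 : v1 ≠ 0 := by rintro rfl; simp at hda; omega
              have hv20 : v2 ≠ 0 := by rintro rfl; simp at hdb; omega
              have hnsum : n = v1 + v2 := by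
                have : d * n = d * (v1 + v2) := by omega
                exact Nat.eq_of_mul_eq_mul_left (by omega) this
              exact hn.2.2 v1 v2 hv1 hv2 hv10 hv20 hnsum
            · exact this hnv0 hv0 (by omega)
  refine ⟨hset, ?_⟩
  -- cardinality part
  set C : Set ℕ := {n | n ∈ msg Δ ∧ d * n ∈ genBy A} with hC
  set C' : Set ℕ := {n | n ∈ msg Δ ∧ d * n ∉ genBy A} with hC'
  have hmΔfin : (msg Δ).Finite := msg_finite hΔ
  have hmSfin : (msg S).Finite := msg_finite hS
  have hCfin : C.Finite := hmΔfin.subset (fun n hn => hn.1)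
  have hC'fin : C'.Finite := hmΔfin.subset (fun n hn => hn.1)
  have hAfin : A.Finite := hmSfin.subset (by rw [hA]; exact Set.diff_subset)
  have hB : {y | ∃ n ∈ msg Δ, y = d * n ∧ d * n ∉ genBy A} = (fun n => d * n) '' C' := by
    ext y
    constructor
    · rintro ⟨n, hn, rfl, hng⟩; exact ⟨n, ⟨hn, hng⟩, rfl⟩
    · rintro ⟨n, ⟨hn, hng⟩, rfl⟩; exact ⟨n, hn, rfl, hng⟩
  have hinj : Function.Injective (fun n : ℕ => d * n) :=
    fun a b h => Nat.eq_of_mul_eq_mul_left (by omega) h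
  have hBfin : ((fun n => d * n) '' C').Finite := hC'fin.image _
  have hdisj : Disjoint A ((fun n => d * n) '' C') := by
    rw [Set.disjoint_left]
    rintro x hxA ⟨n, hn, rfl⟩
    rw [hA] at hxA
    exact hxA.2 ⟨n, hn.1.1, rfl⟩
  have h1 : edim S = A.ncard + C'.ncard := by
    rw [edim, hset, hB, Set.ncard_union_eq hdisj hAfin hBfin,
      Set.ncard_image_of_injective _ hinj]
  have h2 : edim Δ = C.ncard + C'.ncard := by
    rw [edim]
    have : msg Δ = C ∪ C' := by
      ext n; simp only [hC, hC', Set.mem_union, Set.mem_setOf_eq]; tauto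
    rw [this, Set.ncard_union_eq (by
      rw [Set.disjoint_left]; rintro n hn hn'; exact hn'.2 hn.2) hCfin hC'fin]
  rw [h1, h2]; omega
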